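/- arXiv:1805.01569 — 3 statements merged into one kernel-verified Lean document; each statement's English description precedes it below -/
import Mathlib

section
/- Let α, β, z ∈ ℂ and set ω = 2·Im( conj(α)·β ), assumed nonzero. Define the real numbers u₁ = Im(z α) and u₂ = Im(z β). Then (|ω| / (2·√(|α|² + |β|²)))·|z| ≤ √(u₁² + u₂²) ≤ √(|α|² + |β|²)·|z|. -/
open Complex

theorem prufer_amplitude_comparable (α β z : ℂ) (ω : ℝ)
    (hω : ω = 2 * ((starRingEnd ℂ α) * β).im) (hω0 : ω ≠ 0)
    (u₁ u₂ : ℝ) (hu₁ : u₁ = (z * α).im) (hu₂ : u₂ = (z * β).im) :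
    (|ω| / (2 * Real.sqrt (‖α‖ ^ 2 + ‖β‖ ^ 2))) * ‖z‖
      ≤ Real.sqrt (u₁ ^ 2 + u₂ ^ 2) ∧
    Real.sqrt (u₁ ^ 2 + u₂ ^ 2)
      ≤ Real.sqrt (‖α‖ ^ 2 + ‖β‖ ^ 2) * ‖z‖ := by
  set S := Real.sqrt (‖α‖ ^ 2 + ‖β‖ ^ 2) with hS
  set R := Real.sqrt (u₁ ^ 2 + u₂ ^ 2) with hR
  have hα : α ≠ 0 := by
    rintro rfl
    simp at hω
    exact hω0 (by simp [hω])
  have hSpos : 0 < S := by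
    rw [hS]
    apply Real.sqrt_pos.mpr
    have : 0 < ‖α‖ ^ 2 := pow_pos (norm_pos_iff.mpr hα) 2
    nlinarith [sq_nonneg (‖β‖)]
  have hR0 : 0 ≤ R := Real.sqrt_nonneg _
  -- upper bound
  have hup : R ≤ S * ‖z‖ := by
    have h1 : u₁ ^ 2 ≤ (‖z‖ * ‖α‖) ^ 2 := by
      rw [hu₁, ← norm_mul, ← _root_.sq_abs ((z * α).im)]
      exact pow_le_pow_left₀ (abs_nonneg _) (Complex.abs_im_le_norm _) 2
    have h2 : u₂ ^ 2 ≤ (‖z‖ * ‖β‖) ^ 2 := by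
      rw [hu₂, ← norm_mul, ← _root_.sq_abs ((z * β).im)]
      exact pow_le_pow_left₀ (abs_nonneg _) (Complex.abs_im_le_norm _) 2
    calc R ≤ Real.sqrt ((‖z‖ * ‖α‖) ^ 2
          + (‖z‖ * ‖β‖) ^ 2) := by
          apply Real.sqrt_le_sqrt; linarith
      _ = Real.sqrt (‖z‖ ^ 2 * (‖α‖ ^ 2 + ‖β‖ ^ 2)) := by
          ring_nf
      _ = ‖z‖ * S := by
          rw [Real.sqrt_mul (by positivity), Real.sqrt_sq (norm_nonneg z)]
      _ = S * ‖z‖ := mul_comm _ _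
  refine ⟨?_, hup⟩
  -- lower bound
  set a := (z * α).re with ha
  set b := (z * β).re with hb
  have key : ω * ‖z‖ ^ 2 = 2 * (a * u₂ - u₁ * b) := by
    rw [hω, hu₁, hu₂, ha, hb, Complex.sq_norm, Complex.normSq_apply]
    simp [Complex.mul_re, Complex.mul_im]
    ring
  have hab : Real.sqrt (a ^ 2 + b ^ 2) ≤ ‖z‖ * S := by
    have h1 : a ^ 2 ≤ (‖z‖ * ‖α‖) ^ 2 := by
      rw [ha, ← norm_mul, ← _root_.sq_abs ((z * α).re)]
      exact pow_le_pow_left₀ (abs_nonneg _) (Complex.abs_re_le_norm _) 2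
    have h2 : b ^ 2 ≤ (‖z‖ * ‖β‖) ^ 2 := by
      rw [hb, ← norm_mul, ← _root_.sq_abs ((z * β).re)]
      exact pow_le_pow_left₀ (abs_nonneg _) (Complex.abs_re_le_norm _) 2
    calc Real.sqrt (a ^ 2 + b ^ 2)
        ≤ Real.sqrt ((‖z‖ * ‖α‖) ^ 2
          + (‖z‖ * ‖β‖) ^ 2) := by
          apply Real.sqrt_le_sqrt; linarith
      _ = Real.sqrt (‖z‖ ^ 2 * (‖α‖ ^ 2 + ‖β‖ ^ 2)) := by
          ring_nf
      _ = ‖z‖ * S := by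
          rw [Real.sqrt_mul (by positivity), Real.sqrt_sq (norm_nonneg z)]
  -- Cauchy-Schwarz
  have hcs : |a * u₂ - u₁ * b| ≤ Real.sqrt (a ^ 2 + b ^ 2) * R := by
    have hsq : (a * u₂ - u₁ * b) ^ 2 ≤ (a ^ 2 + b ^ 2) * (u₁ ^ 2 + u₂ ^ 2) := by
      nlinarith [sq_nonneg (a * u₁ + b * u₂)]
    have := Real.sqrt_le_sqrt hsq
    rw [Real.sqrt_sq_eq_abs, Real.sqrt_mul (by positivity)] at this
    exact this
  have hmain : |ω| * ‖z‖ ^ 2 ≤ 2 * (‖z‖ * S) * R := by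
    have : |ω * ‖z‖ ^ 2| = 2 * |a * u₂ - u₁ * b| := by
      rw [key, abs_mul]; simp
    have h2 : |ω| * ‖z‖ ^ 2 = |ω * ‖z‖ ^ 2| := by
      rw [abs_mul, _root_.abs_of_nonneg (by positivity : (0:ℝ) ≤ ‖z‖ ^ 2)]
    rw [h2, this]
    have := mul_le_mul_of_nonneg_left hab hR0
    nlinarith [Real.sqrt_nonneg (a ^ 2 + b ^ 2)]
  rcases eq_or_ne z 0 with rfl | hz
  · simp [hR0]
  · have hzpos : 0 < ‖z‖ := by
      simpa using norm_pos_iff.mpr hz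
    rw [div_mul_eq_mul_div, div_le_iff₀ (by positivity)]
    -- |ω| * |z| ≤ R * (2 * S)
    have := mul_le_mul_of_nonneg_left hmain (le_of_lt (inv_pos.mpr hzpos))
    rw [pow_two] at this
    calc |ω| * ‖z‖
        = (‖z‖)⁻¹ * (|ω| * (‖z‖ * ‖z‖)) := by
          field_simp
      _ ≤ (‖z‖)⁻¹ * (2 * (‖z‖ * S) * R) := by
          apply mul_le_mul_of_nonneg_left _ (le_of_lt (inv_pos.mpr hzpos))
          calc |ω| * (‖z‖ * ‖z‖)
              = |ω| * ‖z‖ ^ 2 := by ring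
            _ ≤ 2 * (‖z‖ * S) * R := hmain
      _ = R * (2 * S) := by field_simp
end

section
/- Fix constants ℓ > 0 and M > 0. There exist constants K and C (depending only on ℓ and M) with the following property: for every b ∈ ℝ, every x₀ with x₀ − b ≥ K, and every continuously differentiable θ : [x₀, ∞) → ℝ satisfying |θ'(y) − ℓ| ≤ M/(1 + y − b) for all y ≥ x₀, one has |∫_{x₀}^{x} cos(θ(y))/(1 + y − b) dy| ≤ C/(1 + x₀ − b) for all x > x₀. -/
open Real Set intervalIntegral

theorem oscillatory_cancellation (ℓ M : ℝ) (hℓ : 0 < ℓ) (hM : 0 < M) :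
    ∃ K C : ℝ, ∀ b x₀ : ℝ, x₀ - b ≥ K →
      ∀ θ θ' : ℝ → ℝ,
        (∀ y, x₀ ≤ y → HasDerivAt θ (θ' y) y) →
        (∀ y, x₀ ≤ y → ContinuousAt θ' y) →
        (∀ y, x₀ ≤ y → |θ' y - ℓ| ≤ M / (1 + y - b)) →
        ∀ x, x₀ < x →
          |∫ y in x₀..x, Real.cos (θ y) / (1 + y - b)| ≤ C / (1 + x₀ - b) := by
  refine ⟨0, (M + 3) / ℓ, ?_⟩
  intro b x₀ hK θ θ' hderiv hcont hbound x hx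
  have hle : x₀ ≤ x := hx.le
  have huIcc : uIcc x₀ x = Icc x₀ x := uIcc_of_le hle
  -- positivity of the denominator
  have hd1 : ∀ y ∈ Icc x₀ x, (1:ℝ) ≤ 1 + y - b := by
    intro y hy; have := hy.1; simp only [ge_iff_le] at hK; linarith
  have hdpos : ∀ y ∈ Icc x₀ x, (0:ℝ) < 1 + y - b := fun y hy => lt_of_lt_of_le one_pos (hd1 y hy)
  have hdne : ∀ y ∈ Icc x₀ x, (1:ℝ) + y - b ≠ 0 := fun y hy => (hdpos y hy).ne'
  have hx₀mem : x₀ ∈ Icc x₀ x := ⟨le_refl _, hle⟩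
  have hxmem : x ∈ Icc x₀ x := ⟨hle, le_refl _⟩
  have hd0pos : (0:ℝ) < 1 + x₀ - b := hdpos x₀ hx₀mem
  -- continuity facts
  have hθc : ContinuousOn θ (Icc x₀ x) := fun y hy =>
    ((hderiv y hy.1).continuousAt).continuousWithinAt
  have hθ'c : ContinuousOn θ' (Icc x₀ x) := fun y hy =>
    (hcont y hy.1).continuousWithinAt
  have hdc : ContinuousOn (fun y : ℝ => 1 + y - b) (Icc x₀ x) := by fun_prop
  have hvc : ContinuousOn (fun y : ℝ => (1 + y - b)⁻¹) (Icc x₀ x) :=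
    hdc.inv₀ hdne
  have hdd : ∀ y : ℝ, HasDerivAt (fun y : ℝ => 1 + y - b) 1 y := by
    intro y
    simpa using ((hasDerivAt_id y).const_add 1).sub_const b
  -- derivative of v
  have hvd : ∀ y ∈ Icc x₀ x,
      HasDerivAt (fun y : ℝ => (1 + y - b)⁻¹) (-(1 / (1 + y - b) ^ 2)) y := by
    intro y hy
    exact ((hdd y).inv (hdne y hy)).congr_deriv (by ring)
  -- derivative of u = sin ∘ θ
  have hud : ∀ y ∈ Icc x₀ x,
      HasDerivAt (fun y => Real.sin (θ y)) (Real.cos (θ y) * θ' y) y := by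
    intro y hy
    exact (hderiv y hy.1).sin
  -- integrability facts
  have hu'int : IntervalIntegrable (fun y => Real.cos (θ y) * θ' y) MeasureTheory.volume x₀ x := by
    apply ContinuousOn.intervalIntegrable
    rw [huIcc]
    exact (Real.continuous_cos.comp_continuousOn hθc).mul hθ'c
  have hv'int : IntervalIntegrable (fun y => -(1 / (1 + y - b) ^ 2)) MeasureTheory.volume x₀ x := by
    apply ContinuousOn.intervalIntegrable
    rw [huIcc]
    exact ((continuousOn_const.div (hdc.pow 2) (fun y hy => pow_ne_zero 2 (hdne y hy)))).neg
  have hu'vint : IntervalIntegrable (fun y => Real.cos (θ y) * θ' y * (1 + y - b)⁻¹)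
      MeasureTheory.volume x₀ x := by
    apply ContinuousOn.intervalIntegrable
    rw [huIcc]
    exact ((Real.continuous_cos.comp_continuousOn hθc).mul hθ'c).mul hvc
  have huv'int : IntervalIntegrable (fun y => Real.sin (θ y) * -(1 / (1 + y - b) ^ 2))
      MeasureTheory.volume x₀ x := by
    apply ContinuousOn.intervalIntegrable
    rw [huIcc]
    exact (Real.continuous_sin.comp_continuousOn hθc).mul
      ((continuousOn_const.div (hdc.pow 2) (fun y hy => pow_ne_zero 2 (hdne y hy))).neg)
  -- integration by parts
  have parts : (∫ y in x₀..x, Real.cos (θ y) * θ' y * (1 + y - b)⁻¹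
        + Real.sin (θ y) * -(1 / (1 + y - b) ^ 2))
      = Real.sin (θ x) * (1 + x - b)⁻¹ - Real.sin (θ x₀) * (1 + x₀ - b)⁻¹ := by
    apply intervalIntegral.integral_deriv_mul_eq_sub
      (fun y hy => hud y (huIcc ▸ hy)) (fun y hy => hvd y (huIcc ▸ hy)) hu'int
    apply ContinuousOn.intervalIntegrable
    rw [huIcc]
    exact (continuousOn_const.div (hdc.pow 2) (fun y hy => pow_ne_zero 2 (hdne y hy))).neg
  have hsplit : (∫ y in x₀..x, Real.cos (θ y) * θ' y * (1 + y - b)⁻¹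
        + Real.sin (θ y) * -(1 / (1 + y - b) ^ 2))
      = (∫ y in x₀..x, Real.cos (θ y) * θ' y * (1 + y - b)⁻¹)
        + ∫ y in x₀..x, Real.sin (θ y) * -(1 / (1 + y - b) ^ 2) :=
    intervalIntegral.integral_add hu'vint huv'int
  -- FTC: the integral of 1/(1+y-b)^2
  set J : ℝ := ∫ y in x₀..x, 1 / (1 + y - b) ^ 2 with hJdef
  have hJ : J = (1 + x₀ - b)⁻¹ - (1 + x - b)⁻¹ := by
    rw [hJdef]
    have : ∀ y ∈ uIcc x₀ x, HasDerivAt (fun y : ℝ => -(1 + y - b)⁻¹) (1 / (1 + y - b) ^ 2) y := by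
      intro y hy
      exact (hvd y (huIcc ▸ hy)).neg.congr_deriv (by ring)
    have h := intervalIntegral.integral_eq_sub_of_hasDerivAt
      (fun y hy => this y hy)
      (by
        apply ContinuousOn.intervalIntegrable
        rw [huIcc]
        exact continuousOn_const.div (hdc.pow 2) (fun y hy => pow_ne_zero 2 (hdne y hy)))
    rw [h]; ring
  have hJint : IntervalIntegrable (fun y : ℝ => 1 / (1 + y - b) ^ 2) MeasureTheory.volume x₀ x := by
    apply ContinuousOn.intervalIntegrable
    rw [huIcc]
    exact continuousOn_const.div (hdc.pow 2) (fun y hy => pow_ne_zero 2 (hdne y hy))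
  have hJle : J ≤ (1 + x₀ - b)⁻¹ := by
    rw [hJ]
    have : (0:ℝ) ≤ (1 + x - b)⁻¹ := inv_nonneg.2 (hdpos x hxmem).le
    linarith
  have hJnonneg : 0 ≤ J := by
    rw [hJ]
    have hmono : (1 + x - b)⁻¹ ≤ (1 + x₀ - b)⁻¹ := by
      apply inv_anti₀ hd0pos
      linarith
    linarith
  -- bound on |∫ u v'|
  have hB1 : |∫ y in x₀..x, Real.sin (θ y) * -(1 / (1 + y - b) ^ 2)| ≤ J := by
    calc |∫ y in x₀..x, Real.sin (θ y) * -(1 / (1 + y - b) ^ 2)|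
        ≤ ∫ y in x₀..x, |Real.sin (θ y) * -(1 / (1 + y - b) ^ 2)| :=
          intervalIntegral.abs_integral_le_integral_abs hle
      _ ≤ J := by
          apply intervalIntegral.integral_mono_on hle huv'int.abs hJint
          intro y hy
          have hd := hdpos y hy
          have h2 : (0:ℝ) < (1 + y - b) ^ 2 := by positivity
          rw [abs_mul, abs_neg, abs_div, abs_one, abs_pow, sq_abs]
          calc |Real.sin (θ y)| * (1 / (1 + y - b) ^ 2)
              ≤ 1 * (1 / (1 + y - b) ^ 2) := by
                apply mul_le_mul_of_nonneg_right (Real.abs_sin_le_one _) (by positivity)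
            _ = 1 / (1 + y - b) ^ 2 := one_mul _
  -- the main term A
  set A : ℝ := ∫ y in x₀..x, Real.cos (θ y) * θ' y * (1 + y - b)⁻¹ with hAdef
  have hA : |A| ≤ 3 * (1 + x₀ - b)⁻¹ := by
    have hAeq : A = Real.sin (θ x) * (1 + x - b)⁻¹ - Real.sin (θ x₀) * (1 + x₀ - b)⁻¹
        - ∫ y in x₀..x, Real.sin (θ y) * -(1 / (1 + y - b) ^ 2) := by
      rw [hAdef]; rw [hsplit] at parts; linarith
    have hvx : (1 + x - b)⁻¹ ≤ (1 + x₀ - b)⁻¹ := by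
      apply inv_anti₀ hd0pos; linarith
    have hvxpos : (0:ℝ) ≤ (1 + x - b)⁻¹ := inv_nonneg.2 (hdpos x hxmem).le
    have h1 : |Real.sin (θ x) * (1 + x - b)⁻¹| ≤ (1 + x₀ - b)⁻¹ := by
      rw [abs_mul, abs_of_nonneg hvxpos]
      calc |Real.sin (θ x)| * (1 + x - b)⁻¹ ≤ 1 * (1 + x - b)⁻¹ :=
            mul_le_mul_of_nonneg_right (Real.abs_sin_le_one _) hvxpos
        _ ≤ (1 + x₀ - b)⁻¹ := by rw [one_mul]; exact hvx
    have h2 : |Real.sin (θ x₀) * (1 + x₀ - b)⁻¹| ≤ (1 + x₀ - b)⁻¹ := by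
      rw [abs_mul, abs_of_nonneg (inv_nonneg.2 hd0pos.le)]
      calc |Real.sin (θ x₀)| * (1 + x₀ - b)⁻¹ ≤ 1 * (1 + x₀ - b)⁻¹ :=
            mul_le_mul_of_nonneg_right (Real.abs_sin_le_one _) (inv_nonneg.2 hd0pos.le)
        _ = (1 + x₀ - b)⁻¹ := one_mul _
    have hJ' : J ≤ (1 + x₀ - b)⁻¹ := hJle
    calc |A| ≤ |Real.sin (θ x) * (1 + x - b)⁻¹| + |Real.sin (θ x₀) * (1 + x₀ - b)⁻¹|
          + |∫ y in x₀..x, Real.sin (θ y) * -(1 / (1 + y - b) ^ 2)| := by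
          rw [hAeq]; exact (abs_sub _ _).trans (by gcongr; exact abs_sub _ _)
      _ ≤ (1 + x₀ - b)⁻¹ + (1 + x₀ - b)⁻¹ + (1 + x₀ - b)⁻¹ := by
          gcongr
          exact hB1.trans hJ'
      _ = 3 * (1 + x₀ - b)⁻¹ := by ring
  -- the error term B
  set B : ℝ := ∫ y in x₀..x, Real.cos (θ y) * (ℓ - θ' y) * (1 + y - b)⁻¹ with hBdef
  have hBint : IntervalIntegrable (fun y => Real.cos (θ y) * (ℓ - θ' y) * (1 + y - b)⁻¹)
      MeasureTheory.volume x₀ x := by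
    apply ContinuousOn.intervalIntegrable
    rw [huIcc]
    exact ((Real.continuous_cos.comp_continuousOn hθc).mul (continuousOn_const.sub hθ'c)).mul hvc
  have hMJint : IntervalIntegrable (fun y : ℝ => M * (1 / (1 + y - b) ^ 2))
      MeasureTheory.volume x₀ x := hJint.const_mul M
  have hB : |B| ≤ M * (1 + x₀ - b)⁻¹ := by
    have : |B| ≤ ∫ y in x₀..x, M * (1 / (1 + y - b) ^ 2) := by
      calc |B| ≤ ∫ y in x₀..x, |Real.cos (θ y) * (ℓ - θ' y) * (1 + y - b)⁻¹| :=
            intervalIntegral.abs_integral_le_integral_abs hle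
        _ ≤ ∫ y in x₀..x, M * (1 / (1 + y - b) ^ 2) := by
            apply intervalIntegral.integral_mono_on hle hBint.abs hMJint
            intro y hy
            have hd := hdpos y hy
            have hb := hbound y hy.1
            have hb' : |ℓ - θ' y| ≤ M / (1 + y - b) := by rwa [abs_sub_comm] at hb
            rw [abs_mul, abs_mul, abs_of_nonneg (inv_nonneg.2 hd.le)]
            calc |Real.cos (θ y)| * |ℓ - θ' y| * (1 + y - b)⁻¹
                ≤ 1 * (M / (1 + y - b)) * (1 + y - b)⁻¹ := by
                  apply mul_le_mul_of_nonneg_right _ (inv_nonneg.2 hd.le)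
                  exact mul_le_mul (Real.abs_cos_le_one _) hb' (abs_nonneg _) zero_le_one
              _ = M * (1 / (1 + y - b) ^ 2) := by rw [one_mul, sq, one_div, mul_inv, div_eq_mul_inv]; ring
    calc |B| ≤ ∫ y in x₀..x, M * (1 / (1 + y - b) ^ 2) := this
      _ = M * J := by rw [hJdef, intervalIntegral.integral_const_mul]
      _ ≤ M * (1 + x₀ - b)⁻¹ := mul_le_mul_of_nonneg_left hJle hM.le
  -- combine: ℓ * I = A + B
  have hcomb : ℓ * (∫ y in x₀..x, Real.cos (θ y) / (1 + y - b)) = A + B := by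
    rw [hAdef, hBdef, ← intervalIntegral.integral_add hu'vint hBint,
      ← intervalIntegral.integral_const_mul]
    apply intervalIntegral.integral_congr
    intro y hy
    simp only
    ring
  have hIeq : (∫ y in x₀..x, Real.cos (θ y) / (1 + y - b)) = (A + B) / ℓ := by
    rw [eq_div_iff hℓ.ne']
    linarith
  rw [hIeq, abs_div, abs_of_pos hℓ]
  have hAB : |A + B| ≤ (M + 3) * (1 + x₀ - b)⁻¹ := by
    calc |A + B| ≤ |A| + |B| := abs_add_le _ _
      _ ≤ 3 * (1 + x₀ - b)⁻¹ + M * (1 + x₀ - b)⁻¹ := add_le_add hA hB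
      _ = (M + 3) * (1 + x₀ - b)⁻¹ := by ring
  calc |A + B| / ℓ ≤ ((M + 3) * (1 + x₀ - b)⁻¹) / ℓ := by gcongr
    _ = (M + 3) / ℓ / (1 + x₀ - b) := by ring
end

section
/- Let G ≥ 1, C > 0, M ≥ 0, a ≥ 0. Suppose g : [a, ∞) → ℝ is measurable with 1/G ≤ g(y) ≤ G for all y, and θ : [a, ∞) → ℝ is measurable such that |∫_a^x cos(4θ(y)) / (g(y)(1+y)) dy| ≤ M for all x ≥ a. Then for all x ≥ a, −∫_a^x (C/(2 g(y))) · sin²(2θ(y)) / (1+y) dy ≤ −(C/(4G))·ln((1+x)/(1+a)) + C·M/4. -/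
open Real

lemma intInt_of_bound {f : ℝ → ℝ} (hf : Measurable f) {a b K : ℝ}
    (hK : ∀ y ∈ Set.uIcc a b, |f y| ≤ K) :
    IntervalIntegrable f MeasureTheory.volume a b := by
  apply IntervalIntegrable.mono_fun' (g := fun _ => K) intervalIntegrable_const
    hf.aestronglyMeasurable
  filter_upwards [MeasureTheory.ae_restrict_mem measurableSet_uIoc] with y hy
  exact hK y (Set.uIoc_subset_uIcc hy)

theorem decay_mechanism (G C M a : ℝ) (hG : 1 ≤ G) (hC : 0 < C) (hM : 0 ≤ M) (ha : 0 ≤ a)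
    (g θ : ℝ → ℝ) (hgm : Measurable g) (hθm : Measurable θ)
    (hg : ∀ y, 1 / G ≤ g y ∧ g y ≤ G)
    (hosc : ∀ x, a ≤ x → |∫ y in a..x, Real.cos (4 * θ y) / (g y * (1 + y))| ≤ M) :
    ∀ x, a ≤ x →
      -∫ y in a..x, (C / (2 * g y)) * Real.sin (2 * θ y) ^ 2 / (1 + y)
        ≤ -(C / (4 * G)) * Real.log ((1 + x) / (1 + a)) + C * M / 4 := by
  intro x hx
  have hGpos : (0:ℝ) < G := lt_of_lt_of_le one_pos hG
  have hgpos : ∀ y, 0 < g y := fun y => lt_of_lt_of_le (by positivity) (hg y).1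
  have hmem : ∀ y ∈ Set.uIcc a x, a ≤ y ∧ y ≤ x := by
    intro y hy; rw [Set.uIcc_of_le hx] at hy; exact hy
  have h1y : ∀ y ∈ Set.uIcc a x, (1:ℝ) ≤ 1 + y := by
    intro y hy; linarith [(hmem y hy).1]
  have hinv : ∀ y ∈ Set.uIcc a x, 1 / (g y * (1 + y)) ≤ G := by
    intro y hy
    have h1 := h1y y hy
    have h3 : 1 / G ≤ g y * (1 + y) := by
      calc 1 / G = (1/G) * 1 := by ring
        _ ≤ g y * (1 + y) := mul_le_mul (hg y).1 h1 one_pos.le (hgpos y).le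
    rw [div_le_iff₀ (by nlinarith [hgpos y])]
    have h4 : G * (1/G) = 1 := mul_one_div_cancel hGpos.ne'
    nlinarith [mul_le_mul_of_nonneg_left h3 hGpos.le]
  -- measurability of pieces
  have hmcos : Measurable fun y => Real.cos (4 * θ y) / (g y * (1 + y)) :=
    (Real.measurable_cos.comp (hθm.const_mul 4)).div (hgm.mul (measurable_const.add measurable_id))
  have hm1 : Measurable fun y => C / (4 * (g y * (1 + y))) :=
    measurable_const.div ((hgm.mul (measurable_const.add measurable_id)).const_mul 4)
  have hmF : Measurable fun y => (C / (2 * g y)) * Real.sin (2 * θ y) ^ 2 / (1 + y) :=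
    ((measurable_const.div (hgm.const_mul 2)).mul
      ((Real.measurable_sin.comp (hθm.const_mul 2)).pow measurable_const)).div
      (measurable_const.add measurable_id)
  -- integrability
  have icos : IntervalIntegrable (fun y => Real.cos (4 * θ y) / (g y * (1 + y)))
      MeasureTheory.volume a x := by
    apply intInt_of_bound hmcos (K := G)
    intro y hy
    have h1 := h1y y hy
    have hpos : 0 < g y * (1 + y) := by nlinarith [hgpos y]
    rw [abs_div, abs_of_pos hpos]
    calc |Real.cos (4 * θ y)| / (g y * (1 + y)) ≤ 1 / (g y * (1 + y)) := by
          gcongr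
          exact Real.abs_cos_le_one _
      _ ≤ G := hinv y hy
  have i1 : IntervalIntegrable (fun y => C / (4 * (g y * (1 + y))))
      MeasureTheory.volume a x := by
    apply intInt_of_bound hm1 (K := C * G / 4)
    intro y hy
    have h1 := h1y y hy
    have hpos : 0 < g y * (1 + y) := by nlinarith [hgpos y]
    have hiv := hinv y hy
    rw [abs_of_pos (by positivity)]
    calc C / (4 * (g y * (1 + y))) = (C / 4) * (1 / (g y * (1 + y))) := by
          rw [mul_one_div, div_div]
      _ ≤ (C / 4) * G := by
          apply mul_le_mul_of_nonneg_left (hinv y hy) (by positivity)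
      _ = C * G / 4 := by ring
  have iF : IntervalIntegrable
      (fun y => (C / (2 * g y)) * Real.sin (2 * θ y) ^ 2 / (1 + y))
      MeasureTheory.volume a x := by
    apply intInt_of_bound hmF (K := C * G / 2)
    intro y hy
    have h1 := h1y y hy
    have hgy := hgpos y
    have hs : Real.sin (2 * θ y) ^ 2 ≤ 1 := by
      nlinarith [Real.neg_one_le_sin (2 * θ y), Real.sin_le_one (2 * θ y)]
    have hs0 : 0 ≤ Real.sin (2 * θ y) ^ 2 := sq_nonneg _
    have hGg : 1 / g y ≤ G := by
      rw [div_le_iff₀ hgy]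
      have h4 : G * (1/G) = 1 := mul_one_div_cancel hGpos.ne'
      nlinarith [mul_le_mul_of_nonneg_left (hg y).1 hGpos.le]
    rw [abs_of_nonneg (by positivity)]
    calc (C / (2 * g y)) * Real.sin (2 * θ y) ^ 2 / (1 + y)
        ≤ (C / (2 * g y)) * 1 / 1 := by
          apply div_le_div₀ (by positivity) ?_ one_pos h1
          exact mul_le_mul_of_nonneg_left hs (by positivity)
      _ = (C / 2) * (1 / g y) := by ring
      _ ≤ (C / 2) * G := mul_le_mul_of_nonneg_left hGg (by positivity)
      _ = C * G / 2 := by ring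
  -- pointwise decomposition
  have hdecomp : ∀ y ∈ Set.uIcc a x,
      (C / (2 * g y)) * Real.sin (2 * θ y) ^ 2 / (1 + y)
        = C / (4 * (g y * (1 + y)))
          - (C / 4) * (Real.cos (4 * θ y) / (g y * (1 + y))) := by
    intro y hy
    have h1 : (0:ℝ) < 1 + y := lt_of_lt_of_le one_pos (h1y y hy)
    have hgy := hgpos y
    have hc := Real.cos_two_mul (2 * θ y)
    have hs := Real.sin_sq (2 * θ y)
    rw [show (4 : ℝ) * θ y = 2 * (2 * θ y) by ring, hc, hs]
    field_simp
    ring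
  have hsplit : (∫ y in a..x, (C / (2 * g y)) * Real.sin (2 * θ y) ^ 2 / (1 + y))
      = (∫ y in a..x, C / (4 * (g y * (1 + y))))
        - (C / 4) * ∫ y in a..x, Real.cos (4 * θ y) / (g y * (1 + y)) := by
    rw [← intervalIntegral.integral_const_mul, ← intervalIntegral.integral_sub i1
      (icos.const_mul (C/4))]
    exact intervalIntegral.integral_congr hdecomp
  -- lower bound on ∫ f1
  have hlog : (∫ y in a..x, 1 / (1 + y)) = Real.log ((1 + x) / (1 + a)) := by
    have h := intervalIntegral.integral_comp_add_left (a := a) (b := x)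
      (fun u => 1 / u) 1
    rw [h, integral_one_div]
    intro hmem0
    rw [Set.uIcc_of_le (by linarith)] at hmem0
    linarith [hmem0.1]
  have hmono : (C / (4 * G)) * Real.log ((1 + x) / (1 + a))
      ≤ ∫ y in a..x, C / (4 * (g y * (1 + y))) := by
    rw [← hlog, ← intervalIntegral.integral_const_mul]
    apply intervalIntegral.integral_mono_on hx
    · have hm2 : Measurable fun y : ℝ => 1 / (1 + y) := by fun_prop
      exact (intInt_of_bound hm2 (a := a) (b := x) (K := 1) (by
          intro y hy
          have h1 := h1y y hy
          rw [abs_of_nonneg (by positivity)]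
          rw [div_le_one (by linarith)]
          linarith)).const_mul _
    · exact i1
    · intro y hy
      have hy' : y ∈ Set.uIcc a x := by rw [Set.uIcc_of_le hx]; exact hy
      have h1 : (0:ℝ) < 1 + y := lt_of_lt_of_le one_pos (h1y y hy')
      have hgy := hgpos y
      have hle : g y * (1 + y) ≤ G * (1 + y) :=
        mul_le_mul_of_nonneg_right (hg y).2 h1.le
      calc C / (4 * G) * (1 / (1 + y)) = C / (4 * (G * (1 + y))) := by
            rw [div_mul_div_comm, mul_one, mul_assoc]
        _ ≤ C / (4 * (g y * (1 + y))) := by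
            apply div_le_div_of_nonneg_left hC.le (by positivity)
            nlinarith
  have hoscx := hosc x hx
  have habs : (C / 4) * ∫ y in a..x, Real.cos (4 * θ y) / (g y * (1 + y))
      ≤ C * M / 4 := by
    calc (C / 4) * ∫ y in a..x, Real.cos (4 * θ y) / (g y * (1 + y))
        ≤ (C / 4) * |∫ y in a..x, Real.cos (4 * θ y) / (g y * (1 + y))| :=
          mul_le_mul_of_nonneg_left (le_abs_self _) (by positivity)
      _ ≤ (C / 4) * M := mul_le_mul_of_nonneg_left hoscx (by positivity)
      _ = C * M / 4 := by ring
  rw [hsplit]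
  have : C / (4 * G) = C / (4 * G) := rfl
  nlinarith [hmono, habs]
end
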